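/- Let k > 0 and let f : [0,1] → ℝ be continuous. Define u(z) = ∫_0^1 G_k(z, z') f(z') dz'. Then u(0) = u(1) = 0, u is twice differentiable on (0,1), and −u''(z) + k² u(z) = f(z) for all z ∈ (0,1). -/

import Mathlib

open MeasureTheory intervalIntegral

/-- The Green's function of `−d²/dz² + k²` on `[0,1]` with vanishing Dirichlet
boundary conditions. -/
noncomputable def Gk (k z z' : ℝ) : ℝ :=
  (1 / (k * Real.sinh k)) * Real.sinh (k * min z z') * Real.sinh (k * (1 - max z z'))

/-- Green's function identity: for `k > 0`, `f` continuous on `[0,1]`, the function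
`u(z) = ∫_0^1 G_k(z,z') f(z') dz'` vanishes at `z = 0, 1`, is twice differentiable
on `(0,1)`, and satisfies `−u'' + k² u = f` there. -/
theorem stmt6 (k : ℝ) (hk : 0 < k) (f : ℝ → ℝ) (hf : ContinuousOn f (Set.Icc 0 1))
    (u : ℝ → ℝ) (hu : ∀ z, u z = ∫ z' in (0:ℝ)..1, Gk k z z' * f z') :
    u 0 = 0 ∧ u 1 = 0 ∧
      ∀ z ∈ Set.Ioo (0:ℝ) 1,
        DifferentiableAt ℝ u z ∧ DifferentiableAt ℝ (deriv u) z ∧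
          -deriv (deriv u) z + k ^ 2 * u z = f z := by
  have hs : 0 < Real.sinh k := Real.sinh_pos_iff.2 hk
  have hks : k * Real.sinh k ≠ 0 := by positivity
  set c : ℝ := 1 / (k * Real.sinh k) with hc
  -- boundary values
  have h0 : u 0 = 0 := by
    rw [hu]
    have h : Set.EqOn (fun z' => Gk k 0 z' * f z') (fun _ => (0:ℝ)) (Set.uIcc (0:ℝ) 1) := by
      intro z' hz'
      rw [Set.uIcc_of_le (by norm_num)] at hz'
      simp [Gk, min_eq_left hz'.1]
    rw [intervalIntegral.integral_congr h, intervalIntegral.integral_zero]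
  have h1 : u 1 = 0 := by
    rw [hu]
    have h : Set.EqOn (fun z' => Gk k 1 z' * f z') (fun _ => (0:ℝ)) (Set.uIcc (0:ℝ) 1) := by
      intro z' hz'
      rw [Set.uIcc_of_le (by norm_num)] at hz'
      simp [Gk, max_eq_left hz'.2]
    rw [intervalIntegral.integral_congr h, intervalIntegral.integral_zero]
  refine ⟨h0, h1, ?_⟩
  set g1 : ℝ → ℝ := fun t => Real.sinh (k * t) * f t with hg1def
  set g2 : ℝ → ℝ := fun t => Real.sinh (k * (1 - t)) * f t with hg2def
  set A : ℝ → ℝ := fun z => ∫ t in (0:ℝ)..z, g1 t with hAdef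
  set B : ℝ → ℝ := fun z => ∫ t in z..(1:ℝ), g2 t with hBdef
  set v : ℝ → ℝ := fun z =>
    c * (Real.sinh (k * (1 - z)) * A z + Real.sinh (k * z) * B z) with hvdef
  set w : ℝ → ℝ := fun z =>
    c * k * (-(Real.cosh (k * (1 - z)) * A z) + Real.cosh (k * z) * B z) with hwdef
  -- continuity
  have hg1c : ContinuousOn g1 (Set.Icc 0 1) :=
    (Real.continuous_sinh.comp (continuous_const.mul continuous_id)).continuousOn.mul hf
  have hg2c : ContinuousOn g2 (Set.Icc 0 1) :=
    (Real.continuous_sinh.comp (continuous_const.mul (continuous_const.sub continuous_id))).continuousOn.mul hf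
  have hsub : ∀ a b : ℝ, a ∈ Set.Icc (0:ℝ) 1 → b ∈ Set.Icc (0:ℝ) 1 →
      Set.uIcc a b ⊆ Set.Icc 0 1 := by
    intro a b ha hb
    exact Set.uIcc_subset_Icc ha hb
  have hg1i : ∀ a b : ℝ, a ∈ Set.Icc (0:ℝ) 1 → b ∈ Set.Icc (0:ℝ) 1 →
      IntervalIntegrable g1 volume a b := fun a b ha hb =>
    (hg1c.mono (hsub a b ha hb)).intervalIntegrable
  have hg2i : ∀ a b : ℝ, a ∈ Set.Icc (0:ℝ) 1 → b ∈ Set.Icc (0:ℝ) 1 →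
      IntervalIntegrable g2 volume a b := fun a b ha hb =>
    (hg2c.mono (hsub a b ha hb)).intervalIntegrable
  -- u = v on Ioo 0 1
  have hueqv : ∀ z ∈ Set.Ioo (0:ℝ) 1, u z = v z := by
    intro z hz
    have hzIcc : z ∈ Set.Icc (0:ℝ) 1 := ⟨hz.1.le, hz.2.le⟩
    have hGc : ContinuousOn (fun z' => Gk k z z' * f z') (Set.Icc 0 1) := by
      apply ContinuousOn.mul _ hf
      apply Continuous.continuousOn
      unfold Gk
      fun_prop
    have hint1 : IntervalIntegrable (fun z' => Gk k z z' * f z') volume 0 z :=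
      (hGc.mono (hsub 0 z (by norm_num) hzIcc)).intervalIntegrable
    have hint2 : IntervalIntegrable (fun z' => Gk k z z' * f z') volume z 1 :=
      (hGc.mono (hsub z 1 hzIcc (by norm_num))).intervalIntegrable
    rw [hu, ← intervalIntegral.integral_add_adjacent_intervals hint1 hint2]
    have e1 : (∫ z' in (0:ℝ)..z, Gk k z z' * f z')
        = (c * Real.sinh (k * (1 - z))) * A z := by
      have h : Set.EqOn (fun z' => Gk k z z' * f z')
          (fun z' => (c * Real.sinh (k * (1 - z))) * g1 z') (Set.uIcc (0:ℝ) z) := by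
        intro z' hz'
        rw [Set.uIcc_of_le hz.1.le] at hz'
        simp only [Gk, hg1def, min_eq_right hz'.2, max_eq_left hz'.2]
        ring
      rw [intervalIntegral.integral_congr h, intervalIntegral.integral_const_mul]
    have e2 : (∫ z' in z..(1:ℝ), Gk k z z' * f z')
        = (c * Real.sinh (k * z)) * B z := by
      have h : Set.EqOn (fun z' => Gk k z z' * f z')
          (fun z' => (c * Real.sinh (k * z)) * g2 z') (Set.uIcc z (1:ℝ)) := by
        intro z' hz'
        rw [Set.uIcc_of_le hz.2.le] at hz'
        simp only [Gk, hg2def, min_eq_left hz'.1, max_eq_right hz'.1]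
        ring
      rw [intervalIntegral.integral_congr h, intervalIntegral.integral_const_mul]
    rw [e1, e2, hvdef]
    ring
  -- derivative machinery at z ∈ Ioo 0 1
  have hmaster : ∀ z ∈ Set.Ioo (0:ℝ) 1, HasDerivAt v (w z) z ∧ HasDerivAt A (g1 z) z ∧
      HasDerivAt B (-(g2 z)) z := by
    intro z hz
    have hzIcc : z ∈ Set.Icc (0:ℝ) 1 := ⟨hz.1.le, hz.2.le⟩
    have hnh : Set.Icc (0:ℝ) 1 ∈ nhds z := Icc_mem_nhds hz.1 hz.2
    have hmeas1 : StronglyMeasurableAtFilter g1 (nhds z) volume :=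
      ⟨Set.Ioo 0 1, isOpen_Ioo.mem_nhds hz,
        (hg1c.mono Set.Ioo_subset_Icc_self).aestronglyMeasurable measurableSet_Ioo⟩
    have hmeas2 : StronglyMeasurableAtFilter g2 (nhds z) volume :=
      ⟨Set.Ioo 0 1, isOpen_Ioo.mem_nhds hz,
        (hg2c.mono Set.Ioo_subset_Icc_self).aestronglyMeasurable measurableSet_Ioo⟩
    have hA : HasDerivAt A (g1 z) z :=
      intervalIntegral.integral_hasDerivAt_right (hg1i 0 z (by norm_num) hzIcc) hmeas1
        (hg1c.continuousAt hnh)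
    have hB : HasDerivAt B (-(g2 z)) z :=
      intervalIntegral.integral_hasDerivAt_left (hg2i z 1 hzIcc (by norm_num)) hmeas2
        (hg2c.continuousAt hnh)
    have harg1 : HasDerivAt (fun x : ℝ => k * (1 - x)) (k * (-1)) z :=
      ((hasDerivAt_id z).const_sub 1).const_mul k
    have harg2 : HasDerivAt (fun x : ℝ => k * x) k z := by
      simpa using (hasDerivAt_id z).const_mul k
    have hs2 : HasDerivAt (fun x : ℝ => Real.sinh (k * (1 - x)))
        (Real.cosh (k * (1 - z)) * (k * (-1))) z := harg1.sinh
    have hs1 : HasDerivAt (fun x : ℝ => Real.sinh (k * x))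
        (Real.cosh (k * z) * k) z := harg2.sinh
    have hv0 := ((hs2.mul hA).add (hs1.mul hB)).const_mul c
    refine ⟨?_, hA, hB⟩
    have : HasDerivAt v (c * (Real.cosh (k * (1 - z)) * (k * -1) * A z
        + Real.sinh (k * (1 - z)) * g1 z
        + (Real.cosh (k * z) * k * B z + Real.sinh (k * z) * -(g2 z)))) z := hv0
    convert this using 1
    simp only [hwdef, hg1def, hg2def]
    ring
  have hwderiv : ∀ z ∈ Set.Ioo (0:ℝ) 1, HasDerivAt w
      (c * k * (k * Real.sinh (k * (1 - z)) * A z - Real.cosh (k * (1 - z)) * g1 z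
        + k * Real.sinh (k * z) * B z - Real.cosh (k * z) * g2 z)) z := by
    intro z hz
    obtain ⟨_, hA, hB⟩ := hmaster z hz
    have harg1 : HasDerivAt (fun x : ℝ => k * (1 - x)) (k * (-1)) z :=
      ((hasDerivAt_id z).const_sub 1).const_mul k
    have harg2 : HasDerivAt (fun x : ℝ => k * x) k z := by
      simpa using (hasDerivAt_id z).const_mul k
    have hc2 : HasDerivAt (fun x : ℝ => Real.cosh (k * (1 - x)))
        (Real.sinh (k * (1 - z)) * (k * (-1))) z := harg1.cosh
    have hc1 : HasDerivAt (fun x : ℝ => Real.cosh (k * x))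
        (Real.sinh (k * z) * k) z := harg2.cosh
    have hw0 := (((hc2.mul hA).neg).add (hc1.mul hB)).const_mul (c * k)
    refine hw0.congr_deriv ?_
    ring
  intro z hz
  have hopen := isOpen_Ioo.mem_nhds hz
  have huv : u =ᶠ[nhds z] v := Filter.eventuallyEq_of_mem hopen (fun x hx => hueqv x hx)
  have hu' : HasDerivAt u (w z) z := ((hmaster z hz).1).congr_of_eventuallyEq huv
  have hderiv : ∀ x ∈ Set.Ioo (0:ℝ) 1, deriv u x = w x := by
    intro x hx
    have huvx : u =ᶠ[nhds x] v :=
      Filter.eventuallyEq_of_mem (isOpen_Ioo.mem_nhds hx) (fun y hy => hueqv y hy)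
    exact (((hmaster x hx).1).congr_of_eventuallyEq huvx).deriv
  have hduw : deriv u =ᶠ[nhds z] w := Filter.eventuallyEq_of_mem hopen hderiv
  have hu'' : HasDerivAt (deriv u)
      (c * k * (k * Real.sinh (k * (1 - z)) * A z - Real.cosh (k * (1 - z)) * g1 z
        + k * Real.sinh (k * z) * B z - Real.cosh (k * z) * g2 z)) z :=
    (hwderiv z hz).congr_of_eventuallyEq hduw
  refine ⟨hu'.differentiableAt, hu''.differentiableAt, ?_⟩
  rw [hu''.deriv, hueqv z hz, hvdef]
  simp only [hg1def, hg2def]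
  have key : Real.sinh (k * z) * Real.cosh (k * (1 - z))
      + Real.cosh (k * z) * Real.sinh (k * (1 - z)) = Real.sinh k := by
    rw [← Real.sinh_add]
    congr 1
    ring
  have hc' : c * (k * Real.sinh k) = 1 := by
    rw [hc]; field_simp
  linear_combination (c * k * f z) * key + f z * hc'
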